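/- Let L ≥ 1 and K ≥ L be natural numbers, let z₀, …, z_{L−1} be pairwise distinct complex numbers of modulus 1, and let D = diag(z₀, …, z_{L−1}). Let H₀ be an L×L Hermitian positive semidefinite complex matrix all of whose diagonal entries are nonzero. Then the matrix H̄ = (1/K) · Σ_{k=0}^{K−1} Dᵏ H₀ (Dᵏ)ᴴ has rank L (equivalently, H̄ is positive definite). -/

import Mathlib

open Matrix Finset ComplexOrder

/-- Proposition 1 (frequency smoothing): averaging `Dᵏ H₀ (Dᵏ)ᴴ` over `k < K` with
`D = diag z`, `z` pairwise distinct unimodular, `H₀` Hermitian PSD with nonzero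
diagonal, yields a matrix of full rank `L` (provided `K ≥ L ≥ 1`). -/
theorem stmt_0 (L K : ℕ) (hL : 1 ≤ L) (hK : L ≤ K)
    (z : Fin L → ℂ) (hz : Function.Injective z) (hz1 : ∀ ℓ, ‖z ℓ‖ = 1)
    (H₀ : Matrix (Fin L) (Fin L) ℂ) (hH₀ : H₀.PosSemidef) (hdiag : ∀ ℓ, H₀ ℓ ℓ ≠ 0) :
    ((1 / (K : ℂ)) • ∑ k ∈ Finset.range K,
      (Matrix.diagonal z ^ k) * H₀ * ((Matrix.diagonal z ^ k)ᴴ)).rank = L := by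
  set S : Matrix (Fin L) (Fin L) ℂ :=
    ∑ k ∈ Finset.range K, (Matrix.diagonal z ^ k) * H₀ * ((Matrix.diagonal z ^ k)ᴴ) with hS
  have hterm : ∀ k, ((Matrix.diagonal z ^ k) * H₀ * ((Matrix.diagonal z ^ k)ᴴ)).PosSemidef :=
    fun k => hH₀.mul_mul_conjTranspose_same _
  -- the quadratic form of each term
  have hquad : ∀ (k : ℕ) (x : Fin L → ℂ),
      star x ⬝ᵥ ((Matrix.diagonal z ^ k) * H₀ * ((Matrix.diagonal z ^ k)ᴴ)) *ᵥ x
        = star (((Matrix.diagonal z ^ k)ᴴ) *ᵥ x) ⬝ᵥ H₀ *ᵥ (((Matrix.diagonal z ^ k)ᴴ) *ᵥ x) := by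
    intro k x
    rw [← Matrix.mulVec_mulVec, ← Matrix.mulVec_mulVec, Matrix.dotProduct_mulVec (star x)]
    congr 1
    rw [Matrix.star_mulVec, Matrix.conjTranspose_conjTranspose]
  have hKpos : (0 : ℕ) < K := lt_of_lt_of_le hL hK
  have hcpos : (0 : ℂ) < 1 / (K : ℂ) := by
    have h1 : ((1 / K : ℝ) : ℂ) = 1 / (K : ℂ) := by push_cast; ring
    rw [← h1, Complex.zero_lt_real]
    positivity
  have hSpd : ((1 / (K : ℂ)) • S).PosDef := by
    refine Matrix.posDef_iff_dotProduct_mulVec.mpr ⟨?_, ?_⟩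
    · -- Hermitian
      have hSH : S.IsHermitian := by
        unfold Matrix.IsHermitian
        rw [Matrix.conjTranspose_sum]
        exact Finset.sum_congr rfl fun k _ => (hterm k).1
      unfold Matrix.IsHermitian
      rw [Matrix.conjTranspose_smul, hSH]
      congr 1
      simp [Complex.ext_iff]
    · intro x hx
      -- key: the quadratic form of S at x is nonzero
      have hterm_nonneg : ∀ k ∈ Finset.range K,
          (0:ℂ) ≤ star x ⬝ᵥ ((Matrix.diagonal z ^ k) * H₀ * ((Matrix.diagonal z ^ k)ᴴ)) *ᵥ x :=
        fun k _ => (hterm k).dotProduct_mulVec_nonneg x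
      have hsum_eq : star x ⬝ᵥ S *ᵥ x
          = ∑ k ∈ Finset.range K,
              star x ⬝ᵥ ((Matrix.diagonal z ^ k) * H₀ * ((Matrix.diagonal z ^ k)ᴴ)) *ᵥ x := by
        have hmv : S *ᵥ x = ∑ k ∈ Finset.range K,
            ((Matrix.diagonal z ^ k) * H₀ * ((Matrix.diagonal z ^ k)ᴴ)) *ᵥ x := by
          funext i
          simp only [hS, Matrix.mulVec, dotProduct, Finset.sum_apply,
            Matrix.sum_apply, Finset.sum_mul, Finset.sum_apply]
          exact Finset.sum_comm
        rw [hmv]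
        simp only [dotProduct, Finset.sum_apply, Finset.mul_sum]
        exact Finset.sum_comm
      have hsum_ne : star x ⬝ᵥ S *ᵥ x ≠ 0 := by
        rw [hsum_eq]
        intro h0
        have hall := (Finset.sum_eq_zero_iff_of_nonneg hterm_nonneg).mp h0
        -- each term vanishes, hence H₀ *ᵥ y_k = 0
        have hker : ∀ k ∈ Finset.range K,
            H₀ *ᵥ (((Matrix.diagonal z ^ k)ᴴ) *ᵥ x) = 0 := by
          intro k hk
          exact (hH₀.dotProduct_mulVec_zero_iff _).mp ((hquad k x) ▸ hall k hk)
        -- componentwise vandermonde argument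
        have hx0 : x = 0 := by
          funext i
          have hv : (fun j => H₀ i j * x j) = 0 := by
            apply Matrix.eq_zero_of_forall_pow_sum_mul_pow_eq_zero
              (f := fun j => star (z j)) (fun a b hab => hz (star_injective hab))
            intro k
            have hk : (k : ℕ) ∈ Finset.range K :=
              Finset.mem_range.mpr (lt_of_lt_of_le k.2 hK)
            have hy : ((Matrix.diagonal z ^ (k:ℕ))ᴴ) *ᵥ x = fun j => star (z j) ^ (k:ℕ) * x j := by
              funext j
              simp [Matrix.diagonal_pow, Matrix.diagonal_conjTranspose, Matrix.mulVec_diagonal]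
            have := congrFun (hker k hk) i
            rw [hy] at this
            simp only [Matrix.mulVec, dotProduct, Pi.zero_apply] at this
            rw [← this]
            apply Finset.sum_congr rfl fun j _ => ?_
            ring
          have := congrFun hv i
          simp only [Pi.zero_apply] at this
          exact (mul_eq_zero.mp this).resolve_left (hdiag i)
        exact hx hx0
      have hsum_nonneg : (0:ℂ) ≤ star x ⬝ᵥ S *ᵥ x := by
        rw [hsum_eq]; exact Finset.sum_nonneg hterm_nonneg
      have hSpos : (0:ℂ) < star x ⬝ᵥ S *ᵥ x := lt_of_le_of_ne hsum_nonneg (Ne.symm hsum_ne)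
      calc (0:ℂ) < (1 / (K : ℂ)) * (star x ⬝ᵥ S *ᵥ x) := mul_pos hcpos hSpos
        _ = star x ⬝ᵥ ((1 / (K : ℂ)) • S) *ᵥ x := by
            rw [Matrix.smul_mulVec, dotProduct_smul, smul_eq_mul]
  rw [Matrix.rank_of_isUnit _ hSpd.isUnit, Fintype.card_fin]
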